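/- Let v₁,…,v_κ ∈ ℝⁿ, let w₁,…,w_s be words in noncommuting variables, and let (A,X) be a tuple of n×n real symmetric matrices such that the κs vectors {w_i(A,X)v_k : 1 ≤ i ≤ s, 1 ≤ k ≤ κ} are linearly independent in ℝⁿ. Then the codimension in ℝ^{sκn} of the span of { ((I_κ ⊗ H·w₁(A,X))v, …, (I_κ ⊗ H·w_s(A,X))v) : H ∈ S_n } equals sκ(sκ−1)/2, where v = col(v₁,…,v_κ). -/

import Mathlib

open Matrix


private lemma dual_family {n N : ℕ} (u : Fin N → (Fin n → ℝ)) (hli : LinearIndependent ℝ u) :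
    ∃ e : Fin N → (Fin n → ℝ), ∀ p q, u p ⬝ᵥ e q = if p = q then 1 else 0 := by
  classical
  set W : Submodule ℝ (Fin n → ℝ) := Submodule.span ℝ (Set.range u) with hW
  obtain ⟨W', hc⟩ := Submodule.exists_isCompl W
  let b : Module.Basis (Fin N) ℝ W := Module.Basis.span hli
  let π : (Fin n → ℝ) →ₗ[ℝ] W := W.linearProjOfIsCompl W' hc
  let f : Fin N → ((Fin n → ℝ) →ₗ[ℝ] ℝ) := fun q => (b.coord q).comp π
  have hf : ∀ p q, f q (u p) = if p = q then 1 else 0 := by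
    intro p q
    have hmem : u p ∈ W := Submodule.subset_span ⟨p, rfl⟩
    have h1 : π (u p) = ⟨u p, hmem⟩ := Submodule.linearProjOfIsCompl_apply_left hc ⟨u p, hmem⟩
    have hb : (⟨u p, hmem⟩ : W) = b p := (Module.Basis.span_apply hli p).symm
    simp only [f, LinearMap.comp_apply, h1, hb, Module.Basis.coord_apply, Module.Basis.repr_self]
    simp [Finsupp.single_apply, eq_comm]
  refine ⟨fun q j => f q (Pi.single j 1), fun p q => ?_⟩
  have key : u p ⬝ᵥ (fun j => f q (Pi.single j 1)) = f q (u p) := by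
    rw [dotProduct]
    have h2 : ∀ j, u p j * f q (Pi.single j 1) = f q (Pi.single j (u p j)) := by
      intro j
      rw [← smul_eq_mul, ← _root_.map_smul]
      congr 1
      ext i
      simp [Pi.single_apply, mul_ite]
    rw [Finset.sum_congr rfl fun j _ => h2 j, ← map_sum]
    congr 1
    exact Finset.univ_sum_single (u p)
  rw [key, hf]

private lemma vecMulVec_mulVec' {n : ℕ} (a b y : Fin n → ℝ) :
    vecMulVec a b *ᵥ y = (b ⬝ᵥ y) • a := by
  ext i
  simp [mulVec, dotProduct, vecMulVec_apply, Finset.mul_sum, mul_comm, mul_assoc, mul_left_comm]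

private lemma sum_mulVec' {n : ℕ} {β : Type*} (s : Finset β) (A : β → Matrix (Fin n) (Fin n) ℝ)
    (y : Fin n → ℝ) : (∑ i ∈ s, A i) *ᵥ y = ∑ i ∈ s, A i *ᵥ y := by
  ext j
  simp [mulVec, dotProduct, Matrix.sum_apply, Finset.sum_mul]
  rw [Finset.sum_comm]

private lemma dotProduct_sum' {n : ℕ} {β : Type*} (s : Finset β) (v : Fin n → ℝ)
    (y : β → Fin n → ℝ) : v ⬝ᵥ (∑ i ∈ s, y i) = ∑ i ∈ s, v ⬝ᵥ y i := by
  simp [dotProduct, Finset.mul_sum]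
  rw [Finset.sum_comm]

private lemma chsy_core {n N : ℕ} (u : Fin N → (Fin n → ℝ)) (hli : LinearIndependent ℝ u) :
    Module.finrank ℝ (Submodule.span ℝ
      {x : Fin N → Fin n → ℝ | ∃ H : Matrix (Fin n) (Fin n) ℝ, H.IsSymm ∧
        x = fun p => H *ᵥ u p}) + N * (N - 1) / 2 = N * n := by
  classical
  obtain ⟨e, hdual⟩ := dual_family u hli
  have hdual' : ∀ p q, e q ⬝ᵥ u p = if p = q then 1 else 0 := by
    intro p q; rw [dotProduct_comm]; exact hdual p q
  -- the compatibility map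
  let Ψ : (Fin N → Fin n → ℝ) →ₗ[ℝ] ((Σ b : Fin N, Fin b.val) → ℝ) :=
    { toFun := fun x j =>
        u ⟨j.2.val, j.2.isLt.trans j.1.isLt⟩ ⬝ᵥ x j.1 - u j.1 ⬝ᵥ x ⟨j.2.val, j.2.isLt.trans j.1.isLt⟩
      map_add' := by
        intro x y; funext j
        simp [dotProduct_add]; ring
      map_smul' := by
        intro c x; funext j
        simp [dotProduct_smul, smul_eq_mul]; ring }
  have hker : ∀ x, Ψ x = 0 ↔ ∀ p q, u p ⬝ᵥ x q = u q ⬝ᵥ x p := by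
    intro x
    constructor
    · intro h p q
      rcases lt_trichotomy p q with hpq | hpq | hpq
      · have := congrFun h ⟨q, ⟨p.val, hpq⟩⟩
        simp only [Ψ, LinearMap.coe_mk, AddHom.coe_mk, Pi.zero_apply] at this
        have hp : (⟨p.val, lt_trans (by exact hpq) q.isLt⟩ : Fin N) = p := Fin.ext rfl
        rw [hp] at this
        linarith [this]
      · rw [hpq]
      · have := congrFun h ⟨p, ⟨q.val, hpq⟩⟩
        simp only [Ψ, LinearMap.coe_mk, AddHom.coe_mk, Pi.zero_apply] at this
        have hq : (⟨q.val, lt_trans (by exact hpq) p.isLt⟩ : Fin N) = q := Fin.ext rfl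
        rw [hq] at this
        linarith [this]
    · intro h; funext j
      simp only [Ψ, LinearMap.coe_mk, AddHom.coe_mk, Pi.zero_apply]
      rw [h]; ring
  have hset : {x : Fin N → Fin n → ℝ | ∃ H : Matrix (Fin n) (Fin n) ℝ, H.IsSymm ∧
      x = fun p => H *ᵥ u p} = (LinearMap.ker Ψ : Set (Fin N → Fin n → ℝ)) := by
    ext x
    simp only [Set.mem_setOf_eq, SetLike.mem_coe, LinearMap.mem_ker]
    constructor
    · rintro ⟨H, hH, rfl⟩
      rw [hker]
      intro p q
      calc u p ⬝ᵥ H *ᵥ u q = (u p ᵥ* H) ⬝ᵥ u q := dotProduct_mulVec _ _ _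
        _ = (Hᵀ *ᵥ u p) ⬝ᵥ u q := by rw [mulVec_transpose]
        _ = (H *ᵥ u p) ⬝ᵥ u q := by rw [hH.eq]
        _ = u q ⬝ᵥ H *ᵥ u p := dotProduct_comm _ _
    · intro hx
      have hc : ∀ p q, u p ⬝ᵥ x q = u q ⬝ᵥ x p := (hker x).1 hx
      refine ⟨(∑ q, (vecMulVec (x q) (e q) + vecMulVec (e q) (x q)))
          - ∑ p, ∑ q, (u p ⬝ᵥ x q) • vecMulVec (e p) (e q), ?_, ?_⟩
      · -- symmetry
        show _ = _
        ext i j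
        simp only [transpose_apply, Matrix.sub_apply, Matrix.sum_apply, Matrix.add_apply,
          Matrix.smul_apply, vecMulVec_apply, smul_eq_mul]
        congr 1
        · exact Finset.sum_congr rfl fun q _ => by ring
        · rw [Finset.sum_comm]
          refine Finset.sum_congr rfl fun p _ => Finset.sum_congr rfl fun q _ => ?_
          rw [hc p q]; ring
      · -- maps u r to x r
        funext r
        rw [sub_mulVec, sum_mulVec', sum_mulVec']
        simp only [add_mulVec, vecMulVec_mulVec', smul_mulVec, sum_mulVec']
        have h1 : ∑ q, ((e q ⬝ᵥ u r) • x q + (x q ⬝ᵥ u r) • e q)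
            = x r + ∑ q, (u q ⬝ᵥ x r) • e q := by
          rw [Finset.sum_add_distrib]
          congr 1
          · simp [hdual', ite_smul, Finset.sum_ite_eq]
          · refine Finset.sum_congr rfl fun q _ => ?_
            rw [dotProduct_comm, hc r q]
        have h2 : ∑ p, ∑ q, (u p ⬝ᵥ x q) • ((e q ⬝ᵥ u r) • e p)
            = ∑ p, (u p ⬝ᵥ x r) • e p := by
          refine Finset.sum_congr rfl fun p _ => ?_
          simp [hdual', ite_smul, smul_smul, Finset.sum_ite_eq]
        rw [h1, h2]
        abel
  have hsurj : Function.Surjective Ψ := by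
    intro a
    let A : Fin N → Fin N → ℝ := fun p q => if h : p < q then a ⟨q, ⟨p.val, h⟩⟩ else 0
    refine ⟨fun q => ∑ p, A p q • e p, ?_⟩
    funext j
    obtain ⟨b, i⟩ := j
    have hib : (i : ℕ) < N := i.isLt.trans b.isLt
    simp only [Ψ, LinearMap.coe_mk, AddHom.coe_mk]
    rw [dotProduct_sum', dotProduct_sum']
    simp only [dotProduct_smul, hdual, smul_eq_mul, mul_ite, mul_one, mul_zero]
    rw [Finset.sum_ite_eq, Finset.sum_ite_eq]
    have hlt : (⟨i.val, hib⟩ : Fin N) < b := by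
      rw [Fin.lt_def]; exact i.isLt
    simp only [Finset.mem_univ, if_true]
    have hA1 : A ⟨i.val, hib⟩ b = a ⟨b, i⟩ := by
      simp only [A, dif_pos hlt]
    have hA2 : A b ⟨i.val, hib⟩ = 0 := by
      simp only [A, dif_neg (asymm hlt)]
    rw [hA1, hA2, sub_zero]
  -- now the dimension count
  have hspan : Submodule.span ℝ {x : Fin N → Fin n → ℝ | ∃ H : Matrix (Fin n) (Fin n) ℝ,
      H.IsSymm ∧ x = fun p => H *ᵥ u p} = LinearMap.ker Ψ := by
    rw [hset, Submodule.span_eq]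
  rw [hspan]
  have hrn := LinearMap.finrank_range_add_finrank_ker Ψ
  have hrange : LinearMap.range Ψ = ⊤ := LinearMap.range_eq_top.2 hsurj
  have hdom : Module.finrank ℝ (Fin N → Fin n → ℝ) = N * n := by
    rw [Module.finrank_pi_fintype ℝ]
    simp [Module.finrank_pi, Finset.sum_const]
  have hcard : Module.finrank ℝ ((Σ b : Fin N, Fin b.val) → ℝ) = N * (N - 1) / 2 := by
    rw [Module.finrank_pi, Fintype.card_sigma]
    simp only [Fintype.card_fin]
    rw [Fin.sum_univ_eq_sum_range (fun i => i), Finset.sum_range_id]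
  rw [hrange, finrank_top, hcard, hdom] at hrn
  omega

/-- **Matrix-valued CHSY lemma.** If the `s κ` vectors `w_i(A,X) v_k` are linearly
independent in `ℝⁿ`, then the span of the stacked vectors
`((I_κ ⊗ H w₁(A,X)) v, …, (I_κ ⊗ H w_s(A,X)) v)`, as `H` ranges over the symmetric
`n × n` matrices, has codimension `s κ (s κ − 1)/2` in `ℝ^{s κ n}`.  Here the word
`w_i` is evaluated at the tuple `Y = (A, X)` as `((w_i).map Y).prod`, and
`((I_κ ⊗ M) v)` has `(k, ·)` block `M *ᵥ v k`. -/
theorem chsy_matrix {n s κ m : ℕ}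
    (Y : Fin m → Matrix (Fin n) (Fin n) ℝ) (hY : ∀ i, (Y i).IsSymm)
    (w : Fin s → List (Fin m)) (v : Fin κ → Fin n → ℝ)
    (hli : LinearIndependent ℝ (fun p : Fin s × Fin κ =>
      ((w p.1).map Y).prod *ᵥ v p.2)) :
    Module.finrank ℝ (Submodule.span ℝ
      {x : Fin s → Fin κ → Fin n → ℝ |
        ∃ H : Matrix (Fin n) (Fin n) ℝ, H.IsSymm ∧
          x = fun i k => (H * ((w i).map Y).prod) *ᵥ v k})
      + s * κ * (s * κ - 1) / 2 = s * κ * n := by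
  classical
  set u0 : Fin s × Fin κ → Fin n → ℝ := fun p => ((w p.1).map Y).prod *ᵥ v p.2 with hu0
  let σ : Fin s × Fin κ ≃ Fin (s * κ) := finProdFinEquiv
  set u : Fin (s * κ) → Fin n → ℝ := fun q => u0 (σ.symm q) with hu
  have hliu : LinearIndependent ℝ u := hli.comp σ.symm σ.symm.injective
  -- linear equivalence reshaping
  let E : (Fin s → Fin κ → Fin n → ℝ) ≃ₗ[ℝ] (Fin (s * κ) → Fin n → ℝ) :=
    { toFun := fun x q => x (σ.symm q).1 (σ.symm q).2
      invFun := fun y i k => y (σ (i, k))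
      map_add' := fun x y => rfl
      map_smul' := fun c x => rfl
      left_inv := fun x => by funext i k; simp
      right_inv := fun y => by funext q; simp }
  have himg : E '' {x : Fin s → Fin κ → Fin n → ℝ |
        ∃ H : Matrix (Fin n) (Fin n) ℝ, H.IsSymm ∧
          x = fun i k => (H * ((w i).map Y).prod) *ᵥ v k}
      = {x : Fin (s * κ) → Fin n → ℝ | ∃ H : Matrix (Fin n) (Fin n) ℝ, H.IsSymm ∧
          x = fun p => H *ᵥ u p} := by
    ext y
    constructor
    · rintro ⟨x, ⟨H, hH, rfl⟩, rfl⟩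
      refine ⟨H, hH, ?_⟩
      funext q
      simp only [E, LinearEquiv.coe_mk]
      rw [hu, hu0, mulVec_mulVec]; rfl
    · rintro ⟨H, hH, rfl⟩
      refine ⟨fun i k => (H * ((w i).map Y).prod) *ᵥ v k, ⟨H, hH, rfl⟩, ?_⟩
      funext q
      simp only [E, LinearEquiv.coe_mk]
      rw [hu, hu0, mulVec_mulVec]; rfl
  have key := chsy_core u hliu
  have hfr : Module.finrank ℝ (Submodule.span ℝ
      {x : Fin s → Fin κ → Fin n → ℝ |
        ∃ H : Matrix (Fin n) (Fin n) ℝ, H.IsSymm ∧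
          x = fun i k => (H * ((w i).map Y).prod) *ᵥ v k})
      = Module.finrank ℝ (Submodule.span ℝ
      {x : Fin (s * κ) → Fin n → ℝ | ∃ H : Matrix (Fin n) (Fin n) ℝ, H.IsSymm ∧
          x = fun p => H *ᵥ u p}) := by
    rw [← himg, ← LinearEquiv.coe_coe, Submodule.span_image]
    exact (LinearEquiv.finrank_map_eq E _).symm
  rw [hfr]
  convert key using 2 <;> rw [mul_assoc]
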